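/- arXiv:1211.5118 — 5 statements merged into one kernel-verified Lean document; each statement's English description precedes it below -/
import Mathlib

section
/- If V is a trivial spectrum linear subspace of Mat_n(K), then for every nonzero vector X in K^n there exists a nonzero vector Y in K^n such that Y^T N X = 0 for all N ∈ V. -/
open scoped Matrix

theorem stmt_1 {K : Type*} [Field K] {n : ℕ}
    (V : Submodule K (Matrix (Fin n) (Fin n) K))
    (hV : ∀ N ∈ V, ∀ μ : K, μ ≠ 0 → ∀ x : Fin n → K, N.mulVec x = μ • x → x = 0)
    (X : Fin n → K) (hX : X ≠ 0) :
    ∃ Y : Fin n → K, Y ≠ 0 ∧ ∀ N ∈ V, Y ⬝ᵥ N.mulVec X = 0 := by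
  classical
  let L : Matrix (Fin n) (Fin n) K →ₗ[K] (Fin n → K) :=
    { toFun := fun N => N.mulVec X
      map_add' := fun M N => Matrix.add_mulVec M N X
      map_smul' := fun c N => (Matrix.smul_mulVec c N X) }
  set W : Submodule K (Fin n → K) := V.map L with hW
  have hWlt : W < ⊤ := by
    rcases lt_or_eq_of_le (le_top : W ≤ ⊤) with h | h
    · exact h
    · exfalso
      have hXW : X ∈ W := h ▸ Submodule.mem_top
      obtain ⟨N, hN, hNX⟩ := hXW
      have : X = 0 := hV N hN 1 one_ne_zero X (by rw [one_smul]; exact hNX)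
      exact hX this
  obtain ⟨f, hf, hfW⟩ := W.exists_dual_map_eq_bot_of_lt_top hWlt inferInstance
  set Y : Fin n → K := fun i => f (Pi.single i 1) with hY
  have hfeq : ∀ x : Fin n → K, f x = Y ⬝ᵥ x := by
    intro x
    have : x = ∑ i, x i • (Pi.single i 1 : Fin n → K) := by
      ext j
      simp [Pi.single_apply, Finset.sum_apply]
    rw [this, map_sum]
    simp [dotProduct, Finset.sum_apply, Pi.single_apply, mul_comm, hY]
  refine ⟨Y, ?_, ?_⟩
  · intro h0
    exact hf (LinearMap.ext fun x => by rw [LinearMap.zero_apply, hfeq x, h0]; simp)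
  · intro N hN
    rw [← hfeq]
    have : L N ∈ W := Submodule.mem_map_of_mem hN
    have := hfW ▸ Submodule.mem_map_of_mem (f := f) this
    exact (Submodule.mem_bot K).1 this
end

section
/- Let P ∈ GL_n(K). The space P·Alt_n(K) (all products PA with A alternating) is a trivial spectrum subspace of Mat_n(K) if and only if the quadratic form X ↦ X^T P X on K^n is non-isotropic (i.e., X^T P X = 0 implies X = 0). -/
open scoped Matrix

lemma alt_quad_zero {K : Type*} [Field K] {n : ℕ} (A : Matrix (Fin n) (Fin n) K)
    (h1 : Aᵀ = -A) (h2 : ∀ i, A i i = 0) (x : Fin n → K) : x ⬝ᵥ A.mulVec x = 0 := by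
  have hskew : ∀ i j, A j i = - A i j := by
    intro i j
    have := congrFun (congrFun h1 i) j
    simpa [Matrix.transpose_apply] using this
  have : x ⬝ᵥ A.mulVec x = ∑ p : Fin n × Fin n, x p.1 * A p.1 p.2 * x p.2 := by
    rw [Fintype.sum_prod_type]
    simp [Matrix.mulVec, dotProduct, Finset.mul_sum, mul_assoc]
  rw [this]
  refine Finset.sum_ninvolution Prod.swap ?_ ?_ (fun a => Finset.mem_univ _) (fun a => rfl)
  · rintro ⟨i, j⟩
    simp only [Prod.swap]
    rw [hskew i j]
    ring
  · rintro ⟨i, j⟩ hne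
    simp only [Prod.swap, ne_eq, Prod.mk.injEq]
    intro heq
    obtain ⟨rfl, -⟩ := heq
    exact hne (by simp [h2])

theorem stmt_6 {K : Type*} [Field K] {n : ℕ}
    (P : Matrix (Fin n) (Fin n) K) (hP : IsUnit P) :
    (∀ A : Matrix (Fin n) (Fin n) K, Aᵀ = -A → (∀ i, A i i = 0) →
        ∀ μ : K, μ ≠ 0 → ∀ x : Fin n → K, (P * A).mulVec x = μ • x → x = 0) ↔
      (∀ X : Fin n → K, X ⬝ᵥ P.mulVec X = 0 → X = 0) := by
  have hdet : IsUnit P.det := (Matrix.isUnit_iff_isUnit_det P).mp hP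
  have hPinv : P⁻¹ * P = 1 := Matrix.nonsing_inv_mul P hdet
  have hinvP : P * P⁻¹ = 1 := Matrix.mul_nonsing_inv P hdet
  constructor
  · -- trivial spectrum → nonisotropic
    intro h X hX
    by_contra hX0
    -- x = P X ≠ 0
    set x : Fin n → K := P.mulVec X with hx
    have hxne : x ≠ 0 := by
      intro hx0
      apply hX0
      have : P⁻¹.mulVec (P.mulVec X) = P⁻¹.mulVec 0 := by rw [← hx, hx0]
      simpa [Matrix.mulVec_mulVec, hPinv] using this
    obtain ⟨i, hi⟩ : ∃ i, x i ≠ 0 := by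
      by_contra hc
      push_neg at hc
      exact hxne (funext hc)
    set v : Fin n → K := fun j => if j = i then (x i)⁻¹ else 0 with hv
    have hvx : v ⬝ᵥ x = 1 := by
      simp [hv, dotProduct, ite_mul, Finset.sum_ite_eq', inv_mul_cancel₀ hi]
    set A : Matrix (Fin n) (Fin n) K := Matrix.of fun a b => X a * v b - v a * X b with hA
    have hAT : Aᵀ = -A := by
      ext a b
      simp [hA, Matrix.transpose_apply]
      ring
    have hAd : ∀ a, A a a = 0 := by intro a; simp only [hA, Matrix.of_apply]; ring
    have hAx : A.mulVec x = X := by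
      funext a
      have : A.mulVec x a = X a * (v ⬝ᵥ x) - v a * (X ⬝ᵥ x) := by
        simp [hA, Matrix.mulVec, dotProduct, Finset.mul_sum, sub_mul,
          Finset.sum_sub_distrib, mul_assoc]
      rw [this, hvx]
      have hXx : X ⬝ᵥ x = 0 := hX
      rw [hXx]
      ring
    have heig : (P * A).mulVec x = (1 : K) • x := by
      rw [← Matrix.mulVec_mulVec, hAx, one_smul, hx]
    have := h A hAT hAd 1 one_ne_zero x heig
    exact hxne this
  · -- nonisotropic → trivial spectrum
    intro h A hAT hAd μ hμ x heig
    set z : Fin n → K := P⁻¹.mulVec x with hz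
    have hxz : x = P.mulVec z := by
      simp [hz, Matrix.mulVec_mulVec, hinvP]
    have hAxz : A.mulVec x = μ • z := by
      have h1 : P⁻¹.mulVec ((P * A).mulVec x) = P⁻¹.mulVec (μ • x) := by rw [heig]
      have h2 : (P⁻¹ * (P * A)).mulVec x = μ • P⁻¹.mulVec x := by
        simpa [Matrix.mulVec_mulVec, Matrix.mulVec_smul] using h1
      rw [← mul_assoc, hPinv, one_mul] at h2
      exact h2
    have hq : x ⬝ᵥ A.mulVec x = 0 := alt_quad_zero A hAT hAd x
    rw [hAxz] at hq
    have : x ⬝ᵥ z = 0 := by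
      have : μ * (x ⬝ᵥ z) = 0 := by simpa [dotProduct_smul, smul_eq_mul] using hq
      exact (mul_eq_zero.mp this).resolve_left hμ
    have hz0 : z = 0 := by
      apply h
      rw [← dotProduct_comm, ← hxz]
      exact this
    rw [hxz, hz0, Matrix.mulVec_zero]
end

section
/- If A is an affine subspace of GL_n(K) (all elements invertible) containing I_n, then for every N in the direction space W = A − I_n and every nonzero scalar μ ∈ K, the matrix I_n + μN is invertible; consequently N has no nonzero eigenvalue in K. -/
theorem stmt_10 {K : Type*} [Field K] {n : ℕ}
    (A : Set (Matrix (Fin n) (Fin n) K)) (W : Submodule K (Matrix (Fin n) (Fin n) K))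
    (hAW : A = (fun N => 1 + N) '' (W : Set (Matrix (Fin n) (Fin n) K)))
    (hinv : ∀ M ∈ A, IsUnit M) :
    ∀ N ∈ W, ∀ μ : K, μ ≠ 0 →
      IsUnit (1 + μ • N) ∧ ∀ x : Fin n → K, N.mulVec x = μ • x → x = 0 := by
  intro N hN μ hμ
  have key : ∀ c : K, IsUnit (1 + c • N) := by
    intro c
    apply hinv
    rw [hAW]
    exact ⟨c • N, W.smul_mem c hN, rfl⟩
  refine ⟨key μ, fun x hx => ?_⟩
  have hM := key (-μ⁻¹)
  set M : Matrix (Fin n) (Fin n) K := 1 + (-μ⁻¹) • N with hMdef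
  have hzero : M.mulVec x = 0 := by
    rw [hMdef, Matrix.add_mulVec, Matrix.one_mulVec, Matrix.smul_mulVec, hx,
      smul_smul, neg_mul, inv_mul_cancel₀ hμ]
    simp
  have h1 : (M⁻¹ * M).mulVec x = 0 := by
    rw [← Matrix.mulVec_mulVec, hzero, Matrix.mulVec_zero]
  rwa [Matrix.nonsing_inv_mul M ((Matrix.isUnit_iff_isUnit_det M).mp hM),
    Matrix.one_mulVec] at h1
end

section
/- If the dimension bound dim V ≤ k(k−1)/2 holds for trivial spectrum subspaces of Mat_k(K) for all k < n, and V ⊆ Mat_n(K) is a trivial spectrum subspace that is reducible (some proper nonzero subspace of K^n is invariant under all elements of V), then dim V ≤ n(n−1)/2. -/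
private lemma arith_aux (p q : ℕ) :
    p * (p - 1) / 2 + q * (q - 1) / 2 + q * p ≤ (p + q) * ((p + q) - 1) / 2 := by
  rcases Nat.eq_zero_or_pos p with rfl | hp
  · simp
  rcases Nat.eq_zero_or_pos q with rfl | hq
  · simp
  obtain ⟨p', rfl⟩ : ∃ p', p = p' + 1 := ⟨p - 1, by omega⟩
  obtain ⟨q', rfl⟩ : ∃ q', q = q' + 1 := ⟨q - 1, by omega⟩
  obtain ⟨a, ha⟩ := Nat.even_mul_succ_self p'
  obtain ⟨b, hb⟩ := Nat.even_mul_succ_self q'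
  have h1 : (p' + 1) * ((p' + 1) - 1) = a + a := by
    rw [Nat.add_sub_cancel, mul_comm]; exact ha
  have h2 : (q' + 1) * ((q' + 1) - 1) = b + b := by
    rw [Nat.add_sub_cancel, mul_comm]; exact hb
  have h3 : ((p' + 1) + (q' + 1)) * (((p' + 1) + (q' + 1)) - 1)
      = (a + a) + ((b + b) + 2 * ((q' + 1) * (p' + 1))) := by
    have hs : ((p' + 1) + (q' + 1)) - 1 = p' + q' + 1 := by omega
    rw [hs, ← ha, ← hb]; ring
  rw [h1, h2, h3]
  generalize (q' + 1) * (p' + 1) = c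
  omega

set_option maxHeartbeats 4000000 in
set_option synthInstance.maxHeartbeats 1000000 in
theorem stmt_12 {K : Type*} [Field K] {n : ℕ} (hn : 2 ≤ n)
    (hbound : ∀ k < n, ∀ U : Submodule K (Matrix (Fin k) (Fin k) K),
      (∀ N ∈ U, ∀ μ : K, μ ≠ 0 → ∀ x : Fin k → K, N.mulVec x = μ • x → x = 0) →
        Module.finrank K U ≤ k * (k - 1) / 2)
    (V : Submodule K (Matrix (Fin n) (Fin n) K))
    (hV : ∀ N ∈ V, ∀ μ : K, μ ≠ 0 → ∀ x : Fin n → K, N.mulVec x = μ • x → x = 0)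
    (hred : ∃ U : Submodule K (Fin n → K), U ≠ ⊥ ∧ U ≠ ⊤ ∧
      ∀ N ∈ V, ∀ x ∈ U, N.mulVec x ∈ U) :
    Module.finrank K V ≤ n * (n - 1) / 2 := by
  classical
  obtain ⟨U, hUbot, hUtop, hUinv⟩ := hred
  set p := Module.finrank K U with hp_def
  set q := Module.finrank K ((Fin n → K) ⧸ U) with hq_def
  have hpq : q + p = n := by
    have := Submodule.finrank_quotient_add_finrank U
    rwa [Module.finrank_fin_fun] at this
  have hp1 : 0 < p := by
    haveI : Nontrivial U := Submodule.nontrivial_iff_ne_bot.mpr hUbot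
    exact Module.finrank_pos
  have hq1 : 0 < q := by
    haveI : Nontrivial ((Fin n → K) ⧸ U) :=
      Submodule.Quotient.nontrivial_iff.mpr hUtop
    exact Module.finrank_pos
  have hplt : p < n := by omega
  have hqlt : q < n := by omega
  let bU : Module.Basis (Fin p) K U := Module.finBasis K U
  let bQ : Module.Basis (Fin q) K ((Fin n → K) ⧸ U) := Module.finBasis K ((Fin n → K) ⧸ U)
  -- restriction of each matrix to U
  have hres : ∀ N : V, ∀ x ∈ U, Matrix.mulVecLin (N : Matrix (Fin n) (Fin n) K) x ∈ U := by
    intro N x hx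
    simpa [Matrix.mulVecLin_apply] using hUinv N N.2 x hx
  let ΦA : V →ₗ[K] (U →ₗ[K] U) :=
    { toFun := fun N => (Matrix.mulVecLin (N : Matrix (Fin n) (Fin n) K)).restrict (hres N)
      map_add' := by
        intro N M
        refine LinearMap.ext fun x => Subtype.ext ?_
        simp [LinearMap.restrict_apply, Matrix.mulVecLin_apply, Matrix.add_mulVec]
      map_smul' := by
        intro c N
        refine LinearMap.ext fun x => Subtype.ext ?_
        simp [LinearMap.restrict_apply, Matrix.mulVecLin_apply, Matrix.smul_mulVec] }
  have hq_le : ∀ N : V, U ≤ Submodule.comap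
      (Matrix.mulVecLin (N : Matrix (Fin n) (Fin n) K)) U := by
    intro N x hx
    simpa [Matrix.mulVecLin_apply] using hUinv N N.2 x hx
  let ΦD : V →ₗ[K] (((Fin n → K) ⧸ U) →ₗ[K] ((Fin n → K) ⧸ U)) :=
    { toFun := fun N => Submodule.mapQ U U
        (Matrix.mulVecLin (N : Matrix (Fin n) (Fin n) K)) (hq_le N)
      map_add' := by
        intro N M
        refine LinearMap.ext fun w => ?_
        obtain ⟨v, rfl⟩ := Submodule.Quotient.mk_surjective U w
        simp [Submodule.mapQ_apply, Matrix.mulVecLin_apply, Matrix.add_mulVec]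
      map_smul' := by
        intro c N
        refine LinearMap.ext fun w => ?_
        obtain ⟨v, rfl⟩ := Submodule.Quotient.mk_surjective U w
        simp [Submodule.mapQ_apply, Matrix.mulVecLin_apply, Matrix.smul_mulVec,
          Submodule.Quotient.mk_smul] }
  let A : V →ₗ[K] Matrix (Fin p) (Fin p) K :=
    (LinearMap.toMatrix bU bU).toLinearMap.comp ΦA
  let DD : V →ₗ[K] Matrix (Fin q) (Fin q) K :=
    (LinearMap.toMatrix bQ bQ).toLinearMap.comp ΦD
  -- range A has trivial spectrum
  have hArange : ∀ M ∈ LinearMap.range A, ∀ μ : K, μ ≠ 0 →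
      ∀ x : Fin p → K, M.mulVec x = μ • x → x = 0 := by
    rintro M ⟨N, rfl⟩ μ hμ x hx
    set u : U := bU.equivFun.symm x with hu_def
    have hrep : ⇑(bU.repr u) = x := by
      rw [← Module.Basis.equivFun_apply, hu_def, LinearEquiv.apply_symm_apply]
    have hmv := LinearMap.toMatrix_mulVec_repr bU bU (ΦA N) u
    rw [hrep] at hmv
    have hx' : ((LinearMap.toMatrix bU bU) (ΦA N)).mulVec x = μ • x := hx
    have h5 : ⇑(bU.repr (ΦA N u)) = μ • x := by rw [← hmv]; exact hx'
    have h6 : ⇑(bU.repr (μ • u)) = μ • x := by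
      rw [LinearEquiv.map_smul, ← hrep]; exact Finsupp.coe_smul _ _
    have heq : ΦA N u = μ • u := bU.repr.injective (DFunLike.coe_injective (h5.trans h6.symm))
    have hcoe : (N : Matrix (Fin n) (Fin n) K).mulVec (u : Fin n → K) = μ • (u : Fin n → K) := by
      have := congrArg (Subtype.val) heq
      simpa [ΦA, LinearMap.restrict_apply, Matrix.mulVecLin_apply] using this
    have hu0 : (u : Fin n → K) = 0 := hV N N.2 μ hμ _ hcoe
    have hz : u = 0 := Subtype.ext hu0
    rw [← hrep, hz]; simp
  have hAran_le : Module.finrank K (LinearMap.range A) ≤ p * (p - 1) / 2 :=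
    hbound p hplt _ hArange
  -- matrices killing U
  have hker_kills : ∀ N : V, A N = 0 → ∀ x ∈ U,
      (N : Matrix (Fin n) (Fin n) K).mulVec x = 0 := by
    intro N hN x hx
    have h0 : ΦA N = 0 := by
      have h0' : (LinearMap.toMatrix bU bU) (ΦA N) = 0 := hN
      exact (LinearMap.toMatrix bU bU).map_eq_zero_iff.mp h0'
    have h1 := congrArg Subtype.val (LinearMap.congr_fun h0 ⟨x, hx⟩)
    simpa [ΦA, LinearMap.restrict_apply, Matrix.mulVecLin_apply] using h1
  -- spectrum of the D-block on the kernel of the A-block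
  have hDrange2 : ∀ N : V, A N = 0 → ∀ μ : K, μ ≠ 0 →
      ∀ y : Fin q → K, (DD N).mulVec y = μ • y → y = 0 := by
    intro N hNA μ hμ y hy
    obtain ⟨v, hv⟩ := Submodule.Quotient.mk_surjective U (bQ.equivFun.symm y)
    have hrep : ⇑(bQ.repr (Submodule.Quotient.mk v : (Fin n → K) ⧸ U)) = y := by
      rw [hv, ← Module.Basis.equivFun_apply, LinearEquiv.apply_symm_apply]
    have hmv := LinearMap.toMatrix_mulVec_repr bQ bQ (ΦD N) (Submodule.Quotient.mk v)
    rw [hrep] at hmv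
    have hy' : ((LinearMap.toMatrix bQ bQ) (ΦD N)).mulVec y = μ • y := hy
    have h5 : ⇑(bQ.repr (ΦD N (Submodule.Quotient.mk v))) = μ • y := by rw [← hmv]; exact hy'
    have h6 : ⇑(bQ.repr (μ • (Submodule.Quotient.mk v : (Fin n → K) ⧸ U))) = μ • y := by
      rw [LinearEquiv.map_smul, ← hrep]; exact Finsupp.coe_smul _ _
    have heq : ΦD N (Submodule.Quotient.mk v) = μ • (Submodule.Quotient.mk v : (Fin n → K) ⧸ U) :=
      bQ.repr.injective (DFunLike.coe_injective (h5.trans h6.symm))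
    have hmk : Submodule.Quotient.mk ((N : Matrix (Fin n) (Fin n) K).mulVec v)
        = (Submodule.Quotient.mk (μ • v) : (Fin n → K) ⧸ U) := by
      have h1 : ΦD N (Submodule.Quotient.mk v)
          = Submodule.Quotient.mk ((N : Matrix (Fin n) (Fin n) K).mulVec v) := by
        simp [ΦD, Submodule.mapQ_apply, Matrix.mulVecLin_apply]
      rw [← h1, heq, ← Submodule.Quotient.mk_smul]
    have hmem : (N : Matrix (Fin n) (Fin n) K).mulVec v - μ • v ∈ U :=
      (Submodule.Quotient.eq U).mp hmk
    set u : Fin n → K := (N : Matrix (Fin n) (Fin n) K).mulVec v - μ • v with hu_def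
    set v' : Fin n → K := v + μ⁻¹ • u with hv'_def
    have hNu : (N : Matrix (Fin n) (Fin n) K).mulVec u = 0 := hker_kills N hNA u hmem
    have hev : (N : Matrix (Fin n) (Fin n) K).mulVec v' = μ • v' := by
      rw [hv'_def, Matrix.mulVec_add, Matrix.mulVec_smul, hNu, smul_zero, add_zero]
      rw [smul_add, smul_smul, mul_inv_cancel₀ hμ, one_smul, hu_def]
      abel
    have hv'0 : v' = 0 := hV N N.2 μ hμ v' hev
    have hvU : v ∈ U := by
      have hveq : v = -(μ⁻¹ • u) := by
        have h7 := hv'0; rw [hv'_def] at h7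
        linear_combination (norm := abel) h7
      rw [hveq]
      exact neg_mem (Submodule.smul_mem U _ hmem)
    have hz : (Submodule.Quotient.mk v : (Fin n → K) ⧸ U) = 0 :=
      (Submodule.Quotient.mk_eq_zero U).mpr hvU
    rw [← hrep, hz]; simp
  -- bound on the joint kernel
  have hE_le : Module.finrank K
      ↥(LinearMap.ker A ⊓ LinearMap.ker DD : Submodule K V) ≤ q * p := by
    set E : Submodule K V := LinearMap.ker A ⊓ LinearMap.ker DD with hE_def
    have hinto : ∀ N : V, N ∈ E → ∀ v : Fin n → K,
        ((N : Matrix (Fin n) (Fin n) K)).mulVec v ∈ U := by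
      intro N hN v
      have h0 : ΦD N = 0 := by
        have h0' : (LinearMap.toMatrix bQ bQ) (ΦD N) = 0 := hN.2
        exact (LinearMap.toMatrix bQ bQ).map_eq_zero_iff.mp h0'
      have h1 := LinearMap.congr_fun h0 (Submodule.Quotient.mk v)
      rw [show ΦD N (Submodule.Quotient.mk v)
          = Submodule.Quotient.mk (((N : Matrix (Fin n) (Fin n) K)).mulVec v) by
        simp [ΦD, Submodule.mapQ_apply, Matrix.mulVecLin_apply]] at h1
      exact (Submodule.Quotient.mk_eq_zero U).mp h1
    let g : E → ((Fin n → K) →ₗ[K] U) := fun N =>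
      LinearMap.codRestrict U
        (Matrix.mulVecLin (((N : V)) : Matrix (Fin n) (Fin n) K))
        (fun v => by simpa [Matrix.mulVecLin_apply] using hinto (N : V) N.2 v)
    have hgker : ∀ N : E, U ≤ LinearMap.ker (g N) := by
      intro N x hx
      refine LinearMap.mem_ker.mpr (Subtype.ext ?_)
      simpa [g, LinearMap.codRestrict, Matrix.mulVecLin_apply] using
        hker_kills (N : V) N.2.1 x hx
    let Ψ : E →ₗ[K] (((Fin n → K) ⧸ U) →ₗ[K] U) :=
      { toFun := fun N => Submodule.liftQ U (g N) (hgker N)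
        map_add' := by
          intro N M
          refine Submodule.quot_hom_ext U _ _ fun v => ?_
          refine Subtype.ext ?_
          simp [g, Submodule.liftQ_apply, LinearMap.codRestrict,
            Matrix.mulVecLin_apply, Matrix.add_mulVec]
        map_smul' := by
          intro c N
          refine Submodule.quot_hom_ext U _ _ fun v => ?_
          refine Subtype.ext ?_
          simp [g, Submodule.liftQ_apply, LinearMap.codRestrict,
            Matrix.mulVecLin_apply, Matrix.smul_mulVec] }
    have hΨinj : Function.Injective Ψ := by
      intro N M hNM
      have hall : ∀ v : Fin n → K,
          (((N : V)) : Matrix (Fin n) (Fin n) K).mulVec v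
          = (((M : V)) : Matrix (Fin n) (Fin n) K).mulVec v := by
        intro v
        have h2 := LinearMap.congr_fun hNM (Submodule.Quotient.mk v)
        have h3 := congrArg Subtype.val h2
        simpa [Ψ, g, Submodule.liftQ_apply, LinearMap.codRestrict,
          Matrix.mulVecLin_apply] using h3
      have hmat : (((N : V)) : Matrix (Fin n) (Fin n) K)
          = (((M : V)) : Matrix (Fin n) (Fin n) K) := by
        ext i j
        have h4 := congrFun (hall (Pi.single j 1)) i
        simpa [Matrix.mulVec_single] using h4
      exact Subtype.ext (Subtype.ext hmat)
    calc Module.finrank K E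
        ≤ Module.finrank K (((Fin n → K) ⧸ U) →ₗ[K] U) :=
          LinearMap.finrank_le_finrank_of_injective hΨinj
      _ = q * p := by rw [Module.finrank_linearMap]
  -- the joint block map
  let Θ : V →ₗ[K] (Matrix (Fin p) (Fin p) K × Matrix (Fin q) (Fin q) K) := A.prod DD
  have hkerΘ : LinearMap.ker Θ = LinearMap.ker A ⊓ LinearMap.ker DD :=
    LinearMap.ker_prod A DD
  have hkerΘ_le : Module.finrank K (LinearMap.ker Θ) ≤ q * p := by
    rw [hkerΘ]; exact hE_le
  set S : Submodule K (Matrix (Fin p) (Fin p) K × Matrix (Fin q) (Fin q) K)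
    := LinearMap.range Θ with hS_def
  let π1 : S →ₗ[K] Matrix (Fin p) (Fin p) K := (LinearMap.fst K _ _).comp S.subtype
  have hπ1ran : Module.finrank K (LinearMap.range π1) ≤ p * (p - 1) / 2 := by
    refine hbound p hplt _ ?_
    rintro M ⟨s, rfl⟩ μ hμ x hx
    obtain ⟨N, hN⟩ := s.2
    have hMA : A N = π1 s := congrArg Prod.fst hN
    exact hArange (π1 s) ⟨N, hMA⟩ μ hμ x hx
  let π2 : LinearMap.ker π1 →ₗ[K] Matrix (Fin q) (Fin q) K :=
    (LinearMap.snd K _ _).comp (S.subtype.comp (LinearMap.ker π1).subtype)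
  have hfst0 : ∀ s : LinearMap.ker π1,
      (((s : S) : Matrix (Fin p) (Fin p) K × Matrix (Fin q) (Fin q) K)).1 = 0 :=
    fun s => LinearMap.mem_ker.mp s.2
  have hπ2inj : Function.Injective π2 := by
    intro s t h
    refine Subtype.ext (Subtype.ext (Prod.ext ?_ ?_))
    · rw [hfst0 s, hfst0 t]
    · exact h
  have hπ2ran : Module.finrank K (LinearMap.range π2) ≤ q * (q - 1) / 2 := by
    refine hbound q hqlt _ ?_
    rintro M ⟨s, rfl⟩ μ hμ y hy
    obtain ⟨N, hN⟩ := ((s : S)).2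
    have hNA : A N = 0 := (congrArg Prod.fst hN).trans (hfst0 s)
    have hND : DD N = π2 s := congrArg Prod.snd hN
    exact hDrange2 N hNA μ hμ y (by rw [hND]; exact hy)
  have hkerπ1_le : Module.finrank K (LinearMap.ker π1) ≤ q * (q - 1) / 2 := by
    rw [← LinearMap.finrank_range_of_inj hπ2inj]
    exact hπ2ran
  -- combine
  have h1 : Module.finrank K (LinearMap.range Θ) + Module.finrank K (LinearMap.ker Θ)
      = Module.finrank K V := LinearMap.finrank_range_add_finrank_ker Θ
  have h2 : Module.finrank K (LinearMap.range π1) + Module.finrank K (LinearMap.ker π1)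
      = Module.finrank K S := LinearMap.finrank_range_add_finrank_ker π1
  rw [← hS_def] at h1
  have hfinal : Module.finrank K V ≤ p * (p - 1) / 2 + q * (q - 1) / 2 + q * p := by omega
  calc Module.finrank K V ≤ p * (p - 1) / 2 + q * (q - 1) / 2 + q * p := hfinal
    _ ≤ (p + q) * ((p + q) - 1) / 2 := arith_aux p q
    _ = n * (n - 1) / 2 := by rw [show p + q = n by omega]
end

section
/- Suppose V is a trivial spectrum subspace of Mat_n(K) (block sizes d and n−d) that contains every matrix of the form [[0,0],[B,0]] with B arbitrary of size (n−d)×d. Then for every N ∈ V, the matrix [[A(N),C(N)],[0,D(N)]] belongs to V, and consequently D(V) = {D(N) : N ∈ V} is a trivial spectrum subspace of Mat_{n−d}(K). -/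
theorem stmt_15 {K : Type*} [Field K] {d m : ℕ} (hd : 0 < d) (hm : 0 < m)
    (V : Submodule K (Matrix (Fin d ⊕ Fin m) (Fin d ⊕ Fin m) K))
    (hV : ∀ N ∈ V, ∀ μ : K, μ ≠ 0 → ∀ x : Fin d ⊕ Fin m → K, N.mulVec x = μ • x → x = 0)
    (hB : ∀ B : Matrix (Fin m) (Fin d) K, Matrix.fromBlocks 0 0 B 0 ∈ V) :
    (∀ N ∈ V, Matrix.fromBlocks (Matrix.toBlocks₁₁ N) (Matrix.toBlocks₁₂ N) 0
        (Matrix.toBlocks₂₂ N) ∈ V) ∧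
      ∀ N ∈ V, ∀ μ : K, μ ≠ 0 →
        ∀ x : Fin m → K, (Matrix.toBlocks₂₂ N).mulVec x = μ • x → x = 0 := by
  have key : ∀ N ∈ V, Matrix.fromBlocks (Matrix.toBlocks₁₁ N) (Matrix.toBlocks₁₂ N) 0
      (Matrix.toBlocks₂₂ N) ∈ V := by
    intro N hN
    have h := V.sub_mem hN (hB (Matrix.toBlocks₂₁ N))
    have hEq : N - Matrix.fromBlocks 0 0 (Matrix.toBlocks₂₁ N) 0
        = Matrix.fromBlocks (Matrix.toBlocks₁₁ N) (Matrix.toBlocks₁₂ N) 0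
          (Matrix.toBlocks₂₂ N) := by
      conv_lhs => rw [← Matrix.fromBlocks_toBlocks N]
      ext (i | i) (j | j) <;>
        simp [Matrix.fromBlocks, Matrix.toBlocks₁₁, Matrix.toBlocks₁₂, Matrix.toBlocks₂₁,
          Matrix.toBlocks₂₂]
    rwa [hEq] at h
  refine ⟨key, ?_⟩
  intro N hN μ hμ x hx
  by_contra hx0
  set A := Matrix.toBlocks₁₁ N with hA
  set C := Matrix.toBlocks₁₂ N with hC
  set D := Matrix.toBlocks₂₂ N with hD
  have hMV := key N hN
  by_cases hinj : Function.Injective ((μ • (1 : Matrix (Fin d) (Fin d) K) - A).mulVecLin)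
  · have hsurj := (LinearMap.injective_iff_surjective).mp hinj
    obtain ⟨y, hy⟩ := hsurj (C.mulVec x)
    have hy' : A.mulVec y + C.mulVec x = μ • y := by
      have h2 : μ • y - A.mulVec y = C.mulVec x := by
        simpa [Matrix.sub_mulVec, Matrix.smul_mulVec, Matrix.one_mulVec] using hy
      rw [← h2]; abel
    have heig : (Matrix.fromBlocks A C 0 D).mulVec (Sum.elim y x) = μ • Sum.elim y x := by
      rw [Matrix.fromBlocks_mulVec, Sum.elim_comp_inl, Sum.elim_comp_inr, hy',
        Matrix.zero_mulVec, zero_add, hx]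
      funext i; cases i <;> simp
    have h0 := hV _ hMV μ hμ _ heig
    exact hx0 (funext fun i => congrFun h0 (Sum.inr i))
  · have hker : LinearMap.ker ((μ • (1 : Matrix (Fin d) (Fin d) K) - A).mulVecLin) ≠ ⊥ :=
      fun h => hinj (LinearMap.ker_eq_bot.mp h)
    obtain ⟨y, hyker, hy0⟩ := Submodule.exists_mem_ne_zero_of_ne_bot hker
    have hy : A.mulVec y = μ • y := by
      have := hyker
      simp only [LinearMap.mem_ker, Matrix.mulVecLin_apply, Matrix.sub_mulVec,
        Matrix.smul_mulVec, Matrix.one_mulVec, sub_eq_zero] at this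
      exact this.symm
    have heig : (Matrix.fromBlocks A C 0 D).mulVec (Sum.elim y 0) = μ • Sum.elim y 0 := by
      rw [Matrix.fromBlocks_mulVec, Sum.elim_comp_inl, Sum.elim_comp_inr,
        Matrix.mulVec_zero, Matrix.mulVec_zero, add_zero, Matrix.zero_mulVec, zero_add, hy]
      funext i; cases i <;> simp
    have h0 := hV _ hMV μ hμ _ heig
    exact hy0 (funext fun i => congrFun h0 (Sum.inl i))
end
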